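/- For the path P_{2k+1} on 2k+1 vertices with adjacency matrix A, the matrix A + 2I is positive definite and 2·eᵀ(A + 2I)⁻¹ e = k + 1; consequently α(P_{2k+1}) = k + 1. -/

import Mathlib

open scoped Classical
open Matrix Finset

/-- The independence number of a finite simple graph. -/
noncomputable def indepNum {V : Type*} [Fintype V] (G : SimpleGraph V) : ℕ :=
  sSup {k | ∃ S : Finset V, (∀ u ∈ S, ∀ v ∈ S, u ≠ v → ¬ G.Adj u v) ∧ S.card = k}

namespace Stmt19Aux

/-- Extend a vector on `Fin n` by zero to `ℕ`. -/
noncomputable def ext' {n : ℕ} (x : Fin n → ℝ) (m : ℕ) : ℝ :=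
  if h : m < n then x ⟨m, h⟩ else 0

lemma ext'_apply {n : ℕ} (x : Fin n → ℝ) (i : Fin n) : ext' x i.1 = x i := by
  simp [ext']

lemma sum_succ {n : ℕ} (x : Fin n → ℝ) (i : ℕ) :
    (∑ j : Fin n, if i + 1 = (j : ℕ) then x j else 0) = ext' x (i + 1) := by
  unfold ext'
  split
  · next h =>
    rw [Finset.sum_eq_single (⟨i + 1, h⟩ : Fin n)]
    · simp
    · intro b _ hb
      rw [if_neg]
      exact fun he => hb (Fin.ext he.symm)
    · intro h; exact absurd (Finset.mem_univ _) h
  · next h =>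
    apply Finset.sum_eq_zero
    intro j _
    rw [if_neg]
    exact fun he => h (he ▸ j.2)

lemma sum_pred {n : ℕ} (x : Fin n → ℝ) (i : ℕ) :
    (∑ j : Fin n, if (j : ℕ) + 1 = i then x j else 0)
      = if i = 0 then 0 else ext' x (i - 1) := by
  cases i with
  | zero => simp
  | succ m =>
    rw [if_neg (Nat.succ_ne_zero m)]
    simp only [Nat.add_sub_cancel]
    unfold ext'
    split
    · next h =>
      rw [Finset.sum_eq_single (⟨m, h⟩ : Fin n)]
      · simp
      · intro b _ hb
        rw [if_neg]
        intro he
        exact hb (Fin.ext (show (b : ℕ) = m by omega))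
      · intro h; exact absurd (Finset.mem_univ _) h
    · next h =>
      apply Finset.sum_eq_zero
      intro j _
      rw [if_neg]
      intro he
      exact h (by have := j.2; omega)

lemma adj_mulVec {n : ℕ} (x : Fin n → ℝ) (i : Fin n) :
    ((SimpleGraph.pathGraph n).adjMatrix ℝ *ᵥ x) i
      = ext' x (i.1 + 1) + (if i.1 = 0 then 0 else ext' x (i.1 - 1)) := by
  have hsplit : ∀ j : Fin n,
      (if (SimpleGraph.pathGraph n).Adj i j then x j else 0)
        = (if (i : ℕ) + 1 = (j : ℕ) then x j else 0)
          + (if (j : ℕ) + 1 = (i : ℕ) then x j else 0) := by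
    intro j
    rw [SimpleGraph.pathGraph_adj]
    by_cases h1 : (i : ℕ) + 1 = (j : ℕ) <;> by_cases h2 : (j : ℕ) + 1 = (i : ℕ)
    · omega
    · rw [if_pos (Or.inl h1), if_pos h1, if_neg h2]; ring
    · rw [if_pos (Or.inr h2), if_neg h1, if_pos h2]; ring
    · rw [if_neg (by tauto), if_neg h1, if_neg h2]; ring
  have : ((SimpleGraph.pathGraph n).adjMatrix ℝ *ᵥ x) i
      = ∑ j : Fin n, (if (SimpleGraph.pathGraph n).Adj i j then x j else 0) := by
    simp [Matrix.mulVec, dotProduct, SimpleGraph.adjMatrix_apply, ite_mul]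
  rw [this]
  rw [Finset.sum_congr rfl (fun j _ => hsplit j), Finset.sum_add_distrib,
    sum_succ, sum_pred]

lemma nat_quad (y : ℕ → ℝ) (m : ℕ) :
    ∑ i ∈ range (m + 1),
        (2 * y i ^ 2 + y i * y (i + 1) + y i * (if i = 0 then 0 else y (i - 1)))
      = y 0 ^ 2 + y m ^ 2 + (∑ i ∈ range m, (y i + y (i + 1)) ^ 2)
          + y m * y (m + 1) := by
  induction m with
  | zero => simp; ring
  | succ m ih =>
    rw [Finset.sum_range_succ, ih, Finset.sum_range_succ]
    simp only [Nat.add_sub_cancel, if_neg (Nat.succ_ne_zero m)]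
    ring

lemma quad (m : ℕ) (x : Fin (m + 1) → ℝ) :
    x ⬝ᵥ (((SimpleGraph.pathGraph (m + 1)).adjMatrix ℝ
        + (2 : ℝ) • (1 : Matrix (Fin (m + 1)) (Fin (m + 1)) ℝ)) *ᵥ x)
      = ext' x 0 ^ 2 + ext' x m ^ 2
          + ∑ i ∈ range m, (ext' x i + ext' x (i + 1)) ^ 2 := by
  have h1 : (((SimpleGraph.pathGraph (m + 1)).adjMatrix ℝ
      + (2 : ℝ) • (1 : Matrix (Fin (m + 1)) (Fin (m + 1)) ℝ)) *ᵥ x)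
      = ((SimpleGraph.pathGraph (m + 1)).adjMatrix ℝ *ᵥ x) + (2 : ℝ) • x := by
    rw [Matrix.add_mulVec, Matrix.smul_mulVec, Matrix.one_mulVec]
  rw [h1]
  have h2 : x ⬝ᵥ (((SimpleGraph.pathGraph (m + 1)).adjMatrix ℝ *ᵥ x) + (2 : ℝ) • x)
      = ∑ i : Fin (m + 1),
          (2 * ext' x i.1 ^ 2 + ext' x i.1 * ext' x (i.1 + 1)
            + ext' x i.1 * (if i.1 = 0 then 0 else ext' x (i.1 - 1))) := by
    simp only [dotProduct, Pi.add_apply, Pi.smul_apply, smul_eq_mul]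
    apply Finset.sum_congr rfl
    intro i _
    rw [adj_mulVec, ext'_apply]
    ring
  rw [h2]
  rw [Fin.sum_univ_eq_sum_range (fun j =>
    (2 * ext' x j ^ 2 + ext' x j * ext' x (j + 1)
      + ext' x j * (if j = 0 then 0 else ext' x (j - 1))))]
  rw [nat_quad]
  have : ext' x (m + 1) = 0 := by simp [ext']
  rw [this]
  ring

lemma herm (m : ℕ) :
    (((SimpleGraph.pathGraph (m + 1)).adjMatrix ℝ
      + (2 : ℝ) • (1 : Matrix (Fin (m + 1)) (Fin (m + 1)) ℝ))).IsHermitian := by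
  apply Matrix.IsHermitian.add
  · show _ = _
    ext i j
    simp only [Matrix.conjTranspose_apply, SimpleGraph.adjMatrix_apply, star_trivial]
    rw [SimpleGraph.adj_comm]
  · show _ = _
    ext i j
    simp [Matrix.conjTranspose_apply, Matrix.one_apply, eq_comm]

lemma posdef (m : ℕ) :
    (((SimpleGraph.pathGraph (m + 1)).adjMatrix ℝ
      + (2 : ℝ) • (1 : Matrix (Fin (m + 1)) (Fin (m + 1)) ℝ))).PosDef := by
  refine Matrix.PosDef.of_dotProduct_mulVec_pos (herm m) ?_
  intro x hx
  have hst : star x = x := by funext i; simp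
  rw [hst, quad]
  have hnn : (0:ℝ) ≤ ext' x 0 ^ 2 + ext' x m ^ 2
      + ∑ i ∈ range m, (ext' x i + ext' x (i + 1)) ^ 2 := by
    have := Finset.sum_nonneg (fun i (_ : i ∈ range m) => sq_nonneg (ext' x i + ext' x (i + 1)))
    nlinarith [sq_nonneg (ext' x 0), sq_nonneg (ext' x m)]
  rcases lt_or_eq_of_le hnn with h | h
  · exact h
  exfalso
  apply hx
  have hs : (0:ℝ) ≤ ∑ i ∈ range m, (ext' x i + ext' x (i + 1)) ^ 2 :=
    Finset.sum_nonneg (fun i _ => sq_nonneg _)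
  have h0 : ext' x 0 ^ 2 = 0 := by nlinarith [sq_nonneg (ext' x m)]
  have hm : (∑ i ∈ range m, (ext' x i + ext' x (i + 1)) ^ 2) = 0 := by
    nlinarith [sq_nonneg (ext' x 0), sq_nonneg (ext' x m)]
  have hz : ∀ i ∈ range m, (ext' x i + ext' x (i + 1)) ^ 2 = 0 :=
    (Finset.sum_eq_zero_iff_of_nonneg (fun i _ => sq_nonneg _)).1 hm
  have key : ∀ j : ℕ, j ≤ m → ext' x j = 0 := by
    intro j
    induction j with
    | zero => intro _; exact pow_eq_zero_iff (two_ne_zero) |>.1 h0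
    | succ j ih =>
      intro hj
      have h1 : ext' x j + ext' x (j + 1) = 0 :=
        pow_eq_zero_iff (two_ne_zero) |>.1 (hz j (Finset.mem_range.2 (by omega)))
      have h2 : ext' x j = 0 := ih (by omega)
      linarith
  funext i
  have : ext' x i.1 = 0 := key i.1 (by have := i.2; omega)
  rw [ext'_apply] at this
  exact this

lemma sum_half (k : ℕ) :
    ∑ i ∈ range (2 * k + 1), (if i % 2 = 0 then (1/2 : ℝ) else 0) = (k + 1) / 2 := by
  induction k with
  | zero => simp
  | succ k ih =>
    have h : 2 * (k + 1) + 1 = (2 * k + 1) + 1 + 1 := by ring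
    rw [h, Finset.sum_range_succ, Finset.sum_range_succ, ih,
      if_neg (by omega), if_pos (by omega)]
    push_cast
    ring

end Stmt19Aux

open Stmt19Aux in
/-- Example 4.6: for the path P_{2k+1} with adjacency matrix A, A + 2I is positive
definite, 2·eᵀ(A+2I)⁻¹e = k+1, and α(P_{2k+1}) = k+1. -/
theorem stmt19 (k : ℕ) :
    ((SimpleGraph.pathGraph (2 * k + 1)).adjMatrix ℝ +
        (2 : ℝ) • (1 : Matrix (Fin (2 * k + 1)) (Fin (2 * k + 1)) ℝ)).PosDef ∧
      2 * ((fun _ => (1 : ℝ)) ⬝ᵥ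
          ((SimpleGraph.pathGraph (2 * k + 1)).adjMatrix ℝ +
            (2 : ℝ) • (1 : Matrix (Fin (2 * k + 1)) (Fin (2 * k + 1)) ℝ))⁻¹.mulVec
            fun _ => (1 : ℝ)) = (k : ℝ) + 1 ∧
      indepNum (SimpleGraph.pathGraph (2 * k + 1)) = k + 1 := by
  set M : Matrix (Fin (2 * k + 1)) (Fin (2 * k + 1)) ℝ :=
    (SimpleGraph.pathGraph (2 * k + 1)).adjMatrix ℝ +
      (2 : ℝ) • (1 : Matrix (Fin (2 * k + 1)) (Fin (2 * k + 1)) ℝ) with hM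
  have hPD : M.PosDef := posdef (2 * k)
  refine ⟨hPD, ?_, ?_⟩
  · -- the inverse computation
    set x0 : Fin (2 * k + 1) → ℝ := fun i => if (i : ℕ) % 2 = 0 then 1/2 else 0 with hx0
    have hMx0 : M *ᵥ x0 = fun _ => (1 : ℝ) := by
      funext i
      have hi := i.2
      rw [hM, Matrix.add_mulVec]
      simp only [Pi.add_apply]
      rw [Matrix.smul_mulVec, Matrix.one_mulVec, adj_mulVec]
      simp only [Pi.smul_apply, smul_eq_mul, hx0, ext']
      split_ifs <;> (try norm_num) <;> omega
    have hdet : IsUnit M.det := hPD.det_pos.ne'.isUnit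
    have hinv : M⁻¹ *ᵥ (fun _ => (1 : ℝ)) = x0 := by
      rw [← hMx0, Matrix.mulVec_mulVec, Matrix.nonsing_inv_mul _ hdet, Matrix.one_mulVec]
    show 2 * ((fun _ => (1:ℝ)) ⬝ᵥ (M⁻¹ *ᵥ fun _ => (1:ℝ))) = (k : ℝ) + 1
    rw [hinv]
    have hsum : (fun _ => (1:ℝ)) ⬝ᵥ x0 = (k + 1) / 2 := by
      simp only [dotProduct, one_mul, hx0]
      rw [Fin.sum_univ_eq_sum_range (fun j => if j % 2 = 0 then (1/2 : ℝ) else 0)]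
      exact sum_half k
    rw [hsum]
    ring
  · -- independence number
    have hmem : k + 1 ∈ {m | ∃ S : Finset (Fin (2 * k + 1)),
        (∀ u ∈ S, ∀ v ∈ S, u ≠ v → ¬ (SimpleGraph.pathGraph (2 * k + 1)).Adj u v)
          ∧ S.card = m} := by
      refine ⟨(univ : Finset (Fin (k + 1))).image
        (fun i => (⟨2 * i.1, by have := i.2; omega⟩ : Fin (2 * k + 1))), ?_, ?_⟩
      · intro u hu v hv huv hadj
        simp only [Finset.mem_image] at hu hv
        obtain ⟨a, _, rfl⟩ := hu
        obtain ⟨b, _, rfl⟩ := hv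
        rw [SimpleGraph.pathGraph_adj] at hadj
        simp only [Fin.mk_lt_mk] at hadj
        omega
      · rw [Finset.card_image_of_injective _ ?_, Finset.card_univ, Fintype.card_fin]
        intro a b h
        have : (2 * a.1 : ℕ) = 2 * b.1 := congrArg Fin.val h
        exact Fin.ext (by omega)
    have hbdd : ∀ m ∈ {m | ∃ S : Finset (Fin (2 * k + 1)),
        (∀ u ∈ S, ∀ v ∈ S, u ≠ v → ¬ (SimpleGraph.pathGraph (2 * k + 1)).Adj u v)
          ∧ S.card = m}, m ≤ k + 1 := by
      rintro m ⟨T, hT, rfl⟩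
      by_contra hlt
      push_neg at hlt
      obtain ⟨u, hu, v, hv, huv, hf⟩ :=
        Finset.exists_ne_map_eq_of_card_lt_of_maps_to
          (s := T) (t := (univ : Finset (Fin (k + 1))))
          (f := fun w => (⟨w.1 / 2, by have := w.2; omega⟩ : Fin (k + 1)))
          (by simpa using hlt) (fun a _ => Finset.mem_univ _)
      apply hT u hu v hv huv
      rw [SimpleGraph.pathGraph_adj]
      have h2 : u.1 / 2 = v.1 / 2 := congrArg Fin.val hf
      have h3 : u.1 ≠ v.1 := fun h => huv (Fin.ext h)
      omega
    show sSup _ = k + 1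
    exact le_antisymm (csSup_le ⟨k + 1, hmem⟩ hbdd) (le_csSup ⟨k + 1, hbdd⟩ hmem)
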